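/- Let k be a commutative ring, X a set, and Ω a semigroup. The dendriform family algebra DDF(X,Ω) is generated, under the operations {≺_ω, ≻_ω | ω ∈ Ω}, by the set of single-vertex trees {stree(x) | x ∈ X}, where stree(x) = | ∨_{x,(1,1)} | is the tree with one internal vertex decorated by x. That is, the smallest k-submodule of DDF(X,Ω) containing all stree(x) and closed under all operations ≺_ω and ≻_ω (ω ∈ Ω) equals DDF(X,Ω). -/

import Mathlib

/-- An `X`-decorated `Ω`-typed planar binary tree with at least one internal vertex.
`node l x r` has root vertex decorated by `x : X`; a child `none` is a leaf `|`
(its edge carries the adjoined identity type `1 ∈ Ω¹`), while a child `some (t, α)` is a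
nonempty subtree `t` whose internal edge to the root is typed by `α ∈ Ω`. -/
inductive PBT (X Ω : Type) : Type where
  | node : Option (PBT X Ω × Ω) → X → Option (PBT X Ω × Ω) → PBT X Ω

namespace PBT

variable {X Ω : Type}

/-- The single-vertex tree `stree x = | ∨_{x,(1,1)} |`. -/
def stree (x : X) : PBT X Ω := .node none x none

variable [Semigroup Ω] (k : Type) [CommRing k]

mutual
/-- `T ≺_ω U` on trees (Definition of the dendriform family operations):
for `T = T^l ∨_{x,(α₁,α₂)} T^r`, `T ≺_ω U = T^l ∨_{x,(α₁,α₂ω)} (T^r ≺_ω U + T^r ≻_{α₂} U)`,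
using the conventions `| ≺_ω U = 0`, `| ≻₁ U = U` when `T^r = |`. -/
noncomputable def tprec : PBT X Ω → Ω → PBT X Ω → (PBT X Ω →₀ k)
  | .node tl x none, ω, U => Finsupp.single (.node tl x (some (U, ω))) 1
  | .node tl x (some (t, α)), ω, U =>
      Finsupp.mapDomain (fun s => PBT.node tl x (some (s, α * ω)))
        (tprec t ω U + tsucc t α U)
  termination_by T _ U => sizeOf T + sizeOf U
  decreasing_by all_goals (simp_wf; omega)

/-- `T ≻_ω U` on trees: for `U = U^l ∨_{y,(β₁,β₂)} U^r`,
`T ≻_ω U = (T ≺_{β₁} U^l + T ≻_ω U^l) ∨_{y,(ωβ₁,β₂)} U^r`,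
using the conventions `T ≻_ω | = 0`, `T ≺₁ | = T` when `U^l = |`. -/
noncomputable def tsucc : PBT X Ω → Ω → PBT X Ω → (PBT X Ω →₀ k)
  | T, ω, .node none y ur => Finsupp.single (.node (some (T, ω)) y ur) 1
  | T, ω, .node (some (u, β)) y ur =>
      Finsupp.mapDomain (fun s => PBT.node (some (s, ω * β)) y ur)
        (tprec T β u + tsucc T ω u)
  termination_by T _ U => sizeOf T + sizeOf U
  decreasing_by all_goals (simp_wf; omega)
end

/-- The bilinear extension of `≺_ω` to the free module `DDF(X,Ω) = PBT X Ω →₀ k`. -/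
noncomputable def dprec (ω : Ω) (a b : PBT X Ω →₀ k) : PBT X Ω →₀ k :=
  a.sum fun T ca => b.sum fun U cb => (ca * cb) • tprec k T ω U

/-- The bilinear extension of `≻_ω` to the free module `DDF(X,Ω) = PBT X Ω →₀ k`. -/
noncomputable def dsucc (ω : Ω) (a b : PBT X Ω →₀ k) : PBT X Ω →₀ k :=
  a.sum fun T ca => b.sum fun U cb => (ca * cb) • tsucc k T ω U

end PBT


open PBT

theorem dprec_single {X Ω : Type} [Semigroup Ω] (k : Type) [CommRing k] (ω : Ω)
    (T U : PBT X Ω) :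
    dprec k ω (Finsupp.single T 1) (Finsupp.single U 1) = tprec k T ω U := by
  simp [dprec, Finsupp.sum_single_index]

theorem dsucc_single {X Ω : Type} [Semigroup Ω] (k : Type) [CommRing k] (ω : Ω)
    (T U : PBT X Ω) :
    dsucc k ω (Finsupp.single T 1) (Finsupp.single U 1) = tsucc k T ω U := by
  simp [dsucc, Finsupp.sum_single_index]

theorem tprec_none {X Ω : Type} [Semigroup Ω] (k : Type) [CommRing k]
    (tl : Option (PBT X Ω × Ω)) (x : X) (ω : Ω) (U : PBT X Ω) :
    tprec k (.node tl x none) ω U = Finsupp.single (.node tl x (some (U, ω))) 1 := by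
  rw [tprec.eq_def]

theorem tsucc_none {X Ω : Type} [Semigroup Ω] (k : Type) [CommRing k]
    (T : PBT X Ω) (ω : Ω) (y : X) (ur : Option (PBT X Ω × Ω)) :
    tsucc k T ω (.node none y ur) = Finsupp.single (.node (some (T, ω)) y ur) 1 := by
  rw [tsucc.eq_def]

theorem single_tree_mem {X Ω : Type} [Semigroup Ω] (k : Type) [CommRing k]
    (S : Submodule k (PBT X Ω →₀ k))
    (h1 : ∀ x : X, Finsupp.single (stree x) (1 : k) ∈ S)
    (h2 : ∀ (ω : Ω) (a b : PBT X Ω →₀ k), a ∈ S → b ∈ S → dprec k ω a b ∈ S)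
    (h3 : ∀ (ω : Ω) (a b : PBT X Ω →₀ k), a ∈ S → b ∈ S → dsucc k ω a b ∈ S) :
    ∀ T : PBT X Ω, Finsupp.single T (1 : k) ∈ S
  | .node none x none => h1 x
  | .node none x (some (U, β)) => by
      have hU := single_tree_mem k S h1 h2 h3 U
      have := h2 β _ _ (h1 x) hU
      rw [dprec_single] at this
      rw [stree, tprec_none] at this
      exact this
  | .node (some (T, ω)) x none => by
      have hT := single_tree_mem k S h1 h2 h3 T
      have := h3 ω _ _ hT (h1 x)
      rw [dsucc_single] at this
      rw [stree, tsucc_none] at this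
      exact this
  | .node (some (T, ω)) x (some (U, β)) => by
      have hT := single_tree_mem k S h1 h2 h3 T
      have hU := single_tree_mem k S h1 h2 h3 U
      have hmid : Finsupp.single (PBT.node none x (some (U, β)) : PBT X Ω) (1 : k) ∈ S := by
        have := h2 β _ _ (h1 x) hU
        rw [dprec_single] at this; rw [stree, tprec_none] at this
        exact this
      have := h3 ω _ _ hT hmid
      rw [dsucc_single] at this; rw [tsucc_none] at this
      exact this
  termination_by T => sizeOf T
  decreasing_by all_goals (simp; omega)

open PBT in
/-- The dendriform family algebra `DDF(X,Ω)` is generated, under the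
operations `{≺_ω, ≻_ω | ω ∈ Ω}`, by the single-vertex trees `stree x`, `x ∈ X`: every
`k`-submodule containing all `stree x` and closed under all `≺_ω, ≻_ω` is all of
`DDF(X,Ω)`. -/
theorem DDF_generated_by_strees {X Ω : Type} [Semigroup Ω] (k : Type) [CommRing k] :
    ∀ S : Submodule k (PBT X Ω →₀ k),
      (∀ x : X, Finsupp.single (stree x) (1 : k) ∈ S) →
      (∀ (ω : Ω) (a b : PBT X Ω →₀ k), a ∈ S → b ∈ S → dprec k ω a b ∈ S) →
      (∀ (ω : Ω) (a b : PBT X Ω →₀ k), a ∈ S → b ∈ S → dsucc k ω a b ∈ S) →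
      ∀ a : PBT X Ω →₀ k, a ∈ S := by
  intro S h1 h2 h3 a
  induction a using Finsupp.induction with
  | zero => exact S.zero_mem
  | single_add T c f _ _ ihf =>
      refine S.add_mem ?_ ihf
      have := single_tree_mem k S h1 h2 h3 T
      have := S.smul_mem c this
      simpa using this
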